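/- Let M ≥ 1 and L ≥ 1 be natural numbers, and let r be the concatenation b_0 ∘ a_1 ∘ b_1 ∘ a_2 ∘ b_2 ∘ ⋯ ∘ a_L ∘ b_L, where each a_i is a binary string of length M and each b_i is a binary string of length M+1. Then every contiguous substring of r of length at least 3M+1 contains some b_i entirely as a contiguous substring (i.e., the occurrence of b_i at its designated position in r lies within the substring's range). -/

import Mathlib

lemma flatten_length_const {α : Type*} (c : ℕ) (l : List (List α))
    (h : ∀ x ∈ l, x.length = c) : l.flatten.length = l.length * c := by
  induction l with
  | nil => simp
  | cons x t ih =>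
    simp only [List.flatten_cons, List.length_append, List.length_cons,
      h x (by simp), ih (fun y hy => h y (by simp [hy]))]
    ring

lemma flatten_drop_const {α : Type*} (c : ℕ) (l : List (List α))
    (h : ∀ x ∈ l, x.length = c) (k : ℕ) :
    l.flatten.drop (k * c) = (l.drop k).flatten := by
  induction k generalizing l with
  | zero => simp
  | succ k ih =>
    cases l with
    | nil => simp
    | cons x t =>
      have hx : x.length = c := h x (by simp)
      have : (k + 1) * c = x.length + k * c := by rw [hx]; ring
      rw [List.flatten_cons, this, List.drop_append, Nat.add_sub_cancel_left, List.drop_eq_nil_of_le (Nat.le_add_right _ _), List.nil_append,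
        ih t (fun y hy => h y (by simp [hy]))]
      simp

/-- In the interleaved redundancy string
`r = b₀ ∘ a₁ ∘ b₁ ∘ a₂ ∘ b₂ ∘ ⋯ ∘ a_L ∘ b_L`, where each `aᵢ` has length `M` and
each `bᵢ` has length `M+1`, every contiguous substring of `r` of length at least
`3M+1` contains some marker `bᵢ` entirely (at its designated position
`i·(2M+1)` in `r`). -/
theorem long_fragment_contains_marker (M L : ℕ) (hM : 1 ≤ M) (hL : 1 ≤ L)
    (a : Fin L → List Bool) (bs : Fin (L + 1) → List Bool)
    (ha : ∀ i, (a i).length = M) (hbs : ∀ i, (bs i).length = M + 1)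
    (r : List Bool)
    (hr : r = bs 0 ++ (List.flatten ((List.finRange L).map (fun i => a i ++ bs i.succ))))
    (p len : ℕ) (hlen : 3 * M + 1 ≤ len) (hbound : p + len ≤ r.length) :
    ∃ i : Fin (L + 1),
      p ≤ (i : ℕ) * (2 * M + 1) ∧
      (i : ℕ) * (2 * M + 1) + (M + 1) ≤ p + len ∧
      (r.drop ((i : ℕ) * (2 * M + 1))).take (M + 1) = bs i := by
  set l : List (List Bool) := (List.finRange L).map (fun i => a i ++ bs i.succ) with hl
  have hC : ∀ x ∈ l, x.length = 2 * M + 1 := by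
    intro x hx
    simp only [hl, List.mem_map] at hx
    obtain ⟨j, _, rfl⟩ := hx
    simp [ha, hbs]; ring
  have hlL : l.length = L := by simp [hl]
  have hrlen : r.length = L * (2 * M + 1) + (M + 1) := by
    rw [hr, List.length_append, flatten_length_const _ _ hC, hlL, hbs]; ring
  -- choose the index
  obtain ⟨i0, hi0⟩ : ∃ i0, i0 = (p + 2 * M) / (2 * M + 1) := ⟨_, rfl⟩
  have hdm := Nat.div_add_mod (p + 2 * M) (2 * M + 1)
  have hmod := Nat.mod_lt (p + 2 * M) (show 0 < 2 * M + 1 by omega)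
  have hle : i0 * (2 * M + 1) ≤ p + 2 * M := by rw [hi0]; exact Nat.div_mul_le_self _ _
  have hge : p ≤ i0 * (2 * M + 1) := by rw [mul_comm, hi0]; omega
  have hp2M : p + 2 * M ≤ L * (2 * M + 1) := by omega
  have hi0L : i0 ≤ L := by
    rw [hi0]
    calc (p + 2 * M) / (2 * M + 1) ≤ L * (2 * M + 1) / (2 * M + 1) := Nat.div_le_div_right hp2M
    _ = L := Nat.mul_div_cancel _ (by omega)
  refine ⟨⟨i0, by omega⟩, hge, by simp; omega, ?_⟩
  simp only
  rcases Nat.eq_zero_or_pos i0 with h0 | hpos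
  · subst h0
    have : (⟨0, by omega⟩ : Fin (L + 1)) = 0 := rfl
    rw [this, hr]
    simp only [Nat.zero_mul, List.drop_zero]
    have : M + 1 = (bs 0).length + 0 := by simp [hbs]
    rw [this, List.take_append]
    simp
  · obtain ⟨k, rfl⟩ : ∃ k, i0 = k + 1 := ⟨i0 - 1, by omega⟩
    have hkL : k < L := by omega
    have hdrop1 : r.drop ((k + 1) * (2 * M + 1)) =
        (l.flatten.drop (k * (2 * M + 1))).drop M := by
      rw [hr]
      have h1 : (k + 1) * (2 * M + 1) = (bs 0).length + (k * (2 * M + 1) + M) := by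
        simp [hbs]; ring
      rw [h1, List.drop_append, Nat.add_sub_cancel_left, List.drop_eq_nil_of_le (Nat.le_add_right _ _), List.nil_append, List.drop_drop]
    rw [hdrop1, flatten_drop_const _ _ hC]
    have hkl : k < l.length := by omega
    rw [List.drop_eq_getElem_cons hkl]
    have hget : l[k] = a ⟨k, hkL⟩ ++ bs (⟨k, hkL⟩ : Fin L).succ := by
      simp [hl, List.getElem_finRange]
    rw [List.flatten_cons, hget]
    have h2 : (a ⟨k, hkL⟩ ++ bs (⟨k, hkL⟩ : Fin L).succ) ++ (l.drop (k + 1)).flatten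
        = a ⟨k, hkL⟩ ++ (bs (⟨k, hkL⟩ : Fin L).succ ++ (l.drop (k + 1)).flatten) := by
      simp
    rw [h2]
    have h3 : List.drop M (a ⟨k, hkL⟩ ++ (bs (⟨k, hkL⟩ : Fin L).succ ++ (l.drop (k + 1)).flatten))
        = bs (⟨k, hkL⟩ : Fin L).succ ++ (l.drop (k + 1)).flatten := by
      rw [← ha ⟨k, hkL⟩, List.drop_left]
    rw [h3]
    have h4 : List.take (M + 1) (bs (⟨k, hkL⟩ : Fin L).succ ++ (l.drop (k + 1)).flatten)
        = bs (⟨k, hkL⟩ : Fin L).succ := by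
      rw [← hbs (⟨k, hkL⟩ : Fin L).succ, List.take_left]
    rw [h4]
    have : (⟨k, hkL⟩ : Fin L).succ = (⟨k + 1, by omega⟩ : Fin (L + 1)) := rfl
    rw [this]
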